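/- In a type 1 3D graph, let t be a set of edges of a bubble b (a 2D connected component) forming a tree, and let T be the set of 3D ancestor edges of t. Then T contains no cycle in the 3D graph G, i.e. T is a forest (a set of tree edges) in G. -/
import Mathlib


/-- A finite edge set `S` of a multigraph with endpoint maps `s`, `t` is a forest
(contains no cycle) iff every nonempty subset spans strictly more vertices than it has
edges. -/
def IsForest {V E : Type*} [DecidableEq V] (s t : E → V) (S : Finset E) : Prop :=
  ∀ T ⊆ S, T.Nonempty → T.card < (T.biUnion fun e => {s e, t e}).card

/-- In a type 1 3D graph, let `t2` be a set of edges of a bubble `b`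
(a connected component of the 2D projection, a multigraph with vertex set `V2`, edge set
`E2` and endpoint maps `s2`, `t2`) forming a tree (a forest), and let `T = aE '' t` be the
set of 3D ancestor edges.  The type 1 condition guarantees that the ancestor maps
`aV : V2 → V3` and `aE : E2 → E3` are injective (each 3D vertex/edge of the ancestor
graph has a unique 2D descendent in `b`) and compatible with endpoints.  Then `T`
contains no cycle in the 3D graph: it is a forest of 3D tree edges. -/
theorem type1_tree_lifts_to_forest
    {V2 E2 V3 E3 : Type*} [DecidableEq V2] [DecidableEq E2] [DecidableEq V3]
    [DecidableEq E3]
    (s2 t2 : E2 → V2) (s3 t3 : E3 → V3)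
    (aV : V2 → V3) (aE : E2 → E3)
    (haV : Function.Injective aV) (haE : Function.Injective aE)
    (hcomp : ∀ l : E2,
      (s3 (aE l) = aV (s2 l) ∧ t3 (aE l) = aV (t2 l)) ∨
      (s3 (aE l) = aV (t2 l) ∧ t3 (aE l) = aV (s2 l)))
    (tr : Finset E2) (htr : IsForest s2 t2 tr) :
    IsForest s3 t3 (tr.image aE) := by
  intro T hT hTne
  classical
  -- preimage of T in tr
  set T' : Finset E2 := tr.filter (fun l => aE l ∈ T) with hT'def
  have hTeq : T = T'.image aE := by
    ext e
    simp only [hT'def, Finset.mem_image, Finset.mem_filter]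
    constructor
    · intro he
      obtain ⟨l, hl, rfl⟩ := Finset.mem_image.mp (hT he)
      exact ⟨l, ⟨hl, he⟩, rfl⟩
    · rintro ⟨l, ⟨_, hl⟩, rfl⟩
      exact hl
  have hcard : T.card = T'.card := by
    rw [hTeq, Finset.card_image_of_injective _ haE]
  have hT'sub : T' ⊆ tr := Finset.filter_subset _ _
  have hT'ne : T'.Nonempty := by
    obtain ⟨e, he⟩ := hTne
    obtain ⟨l, hl, rfl⟩ := Finset.mem_image.mp (hT he)
    exact ⟨l, Finset.mem_filter.mpr ⟨hl, he⟩⟩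
  have hverts : (T.biUnion fun e => {s3 e, t3 e})
      = (T'.biUnion fun l => {s2 l, t2 l}).image aV := by
    rw [hTeq, Finset.biUnion_image, Finset.image_biUnion]
    apply Finset.biUnion_congr rfl
    intro l _
    rcases hcomp l with ⟨h1, h2⟩ | ⟨h1, h2⟩ <;>
      simp [h1, h2, Finset.image_insert, Finset.pair_comm]
  have := htr T' hT'sub hT'ne
  rw [hcard, hverts, Finset.card_image_of_injective _ haV]
  exact this
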